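/- For all n in [1,infinity], the percolation probabilities satisfy theta(p) <= theta(p,n) <= (1/p) theta(p) for p in (p_c^*, 1], where theta(p,n) is the probability that the origin belongs to an infinite open *-cluster at time n of the bootstrap dynamics and theta(p) is the corresponding probability at time 0. -/

import Mathlib

open MeasureTheory Filter Set

/-- Sites of the lattice `ℤ²`. -/
abbrev Site : Type := ℤ × ℤ

/-- A configuration of open (`true`, i.e. `1`) and closed (`false`, i.e. `0`) sites. -/
abbrev Config : Type := Site → Bool

/-- Nearest-neighbour adjacency in `ℤ²`. -/
def adj (x y : Site) : Prop := (x.1 - y.1).natAbs + (x.2 - y.2).natAbs = 1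

/-- `*`-adjacency: adjacency in the close-packed lattice `ℤ²_cp`. -/
def adjStar (x y : Site) : Prop :=
  x ≠ y ∧ (x.1 - y.1).natAbs ≤ 1 ∧ (x.2 - y.2).natAbs ≤ 1

/-- The four nearest neighbours of a site. -/
def nbrs (x : Site) : Finset Site :=
  {(x.1 + 1, x.2), (x.1 - 1, x.2), (x.1, x.2 + 1), (x.1, x.2 - 1)}

/-- One step of the bootstrap dynamics: a closed site with at least three open
nearest neighbours becomes open; open sites are stable. -/
def step (ω : Config) : Config := fun x =>
  ω x || decide (3 ≤ ((nbrs x).filter fun y => ω y = true).card)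

/-- The configuration after `n` updates (`evolve ω 0 = ω`). -/
def evolve (ω : Config) : ℕ → Config
  | 0 => ω
  | n + 1 => step (evolve ω n)

/-- The site `x` is open in the final (limiting) configuration `ω̄`. -/
def finalOpen (ω : Config) (x : Site) : Prop := ∃ n, evolve ω n x = true

/-- A closed site `x` is stable iff it stays closed at all times, i.e. it is
closed in the final configuration `ω̄`. -/
def stableClosed (ω : Config) (x : Site) : Prop := ∀ n, evolve ω n x = false

/-- A self-avoiding path (with respect to an adjacency relation `A`) all of whose
sites lie in the set `S`. -/
def IsPathIn (S : Set Site) (A : Site → Site → Prop) (k : ℕ) (π : Fin (k + 1) → Site) : Prop :=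
  Function.Injective π ∧ (∀ i : Fin k, A (π i.castSucc) (π i.succ)) ∧ ∀ i, π i ∈ S

/-- `x` and `y` are joined by a path in `S` for the adjacency relation `A`. -/
def ConnIn (S : Set Site) (A : Site → Site → Prop) (x y : Site) : Prop :=
  ∃ (k : ℕ) (π : Fin (k + 1) → Site),
    π 0 = x ∧ π (Fin.last k) = y ∧ IsPathIn S A k π

/-- The plaquette (unit square of four sites) with lower-left corner `c`. -/
def plaq (c : Site) : Finset Site :=
  {c, (c.1 + 1, c.2), (c.1, c.2 + 1), (c.1 + 1, c.2 + 1)}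

/-- A site is protected if it is closed and belongs to a plaquette of closed sites. -/
def IsProtected (ω : Config) (x : Site) : Prop :=
  ω x = false ∧ ∃ c : Site, x ∈ plaq c ∧ ∀ y ∈ plaq c, ω y = false

/-- The partial cluster `C_{(x,x')}`: sites reachable from `x'` by a self-avoiding
`ℤ²`-path whose first step avoids `x` and whose sites all have the state of `x'`. -/
def partialCluster (ω : Config) (x x' : Site) : Set Site :=
  {y | ∃ (k : ℕ) (π : Fin (k + 1) → Site),
    π 0 = x' ∧ π (Fin.last k) = y ∧ Function.Injective π ∧
    (∀ i : Fin k, adj (π i.castSucc) (π i.succ)) ∧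
    (∀ i, ω (π i) = ω x') ∧ ∀ i : Fin (k + 1), (i : ℕ) = 1 → π i ≠ x}

/-- `μ` is the Bernoulli product measure with density `p` of open sites:
all finite-dimensional marginals are products of Bernoulli(`p`) laws. -/
def IsBernoulli (p : ℝ) (μ : Measure Config) : Prop :=
  ∀ (s : Finset Site) (η : Site → Bool),
    μ {ω : Config | ∀ x ∈ s, ω x = η x} =
      ∏ x ∈ s, ENNReal.ofReal (if η x then p else 1 - p)

/-- `x` belongs to an infinite cluster of `S` for the adjacency relation `A`. -/
def InfClusterIn (S : Set Site) (A : Site → Site → Prop) (x : Site) : Prop :=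
  x ∈ S ∧ {y | ConnIn S A x y}.Infinite

/-- The critical probability `p_c` of independent site percolation on `ℤ²`. -/
noncomputable def pc : ℝ :=
  sInf {p : ℝ | p ∈ Set.Icc (0 : ℝ) 1 ∧
    ∀ μ : Measure Config, IsProbabilityMeasure μ → IsBernoulli p μ →
      0 < μ {ω : Config | ∃ x : Site, InfClusterIn {z | ω z = true} adj x}}


/-! ### Basic graph infrastructure -/

lemma adjStar_symm {x y : Site} (h : adjStar x y) : adjStar y x := by
  obtain ⟨h1, h2, h3⟩ := h
  exact ⟨h1.symm, by omega, by omega⟩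

def GS (S : Set Site) : SimpleGraph Site where
  Adj a b := a ≠ b ∧ a ∈ S ∧ b ∈ S ∧ adjStar a b
  symm := by constructor; rintro a b ⟨h1, h2, h3, h4⟩; exact ⟨h1.symm, h3, h2, adjStar_symm h4⟩
  loopless := by constructor; rintro a ⟨h1, _⟩; exact h1 rfl

abbrev Reach (S : Set Site) (x y : Site) : Prop := (GS S).Reachable x y

lemma Reach.mono {S T : Set Site} (hST : S ⊆ T) {x y : Site} (h : Reach S x y) :
    Reach T x y := by
  refine SimpleGraph.Reachable.mono ?_ h
  rintro a b ⟨h1, h2, h3, h4⟩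
  exact ⟨h1, hST h2, hST h3, h4⟩

lemma connIn_to_reach {S : Set Site} {x y : Site} (h : ConnIn S adjStar x y) :
    Reach S x y := by
  obtain ⟨k, π, h0, hl, hinj, hadj, hmem⟩ := h
  subst h0 hl
  induction k with
  | zero =>
    have : Fin.last 0 = (0 : Fin 1) := rfl
    rw [this]
  | succ k ih =>
    have step1 : Reach S (π 0) (π (Fin.last k).castSucc) := by
      have := ih (fun i : Fin (k+1) => π i.castSucc)
        (fun a b hab => Fin.castSucc_injective _ (hinj hab))
        (fun i => hadj i.castSucc) (fun i => hmem i.castSucc)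
      simpa using this
    refine step1.trans (SimpleGraph.Adj.reachable ?_)
    have hadjl := hadj (Fin.last k)
    refine ⟨fun hh => ?_, hmem _, hmem _, by
      simpa [Fin.succ_last] using hadjl⟩
    · have := hinj hh
      simp [Fin.ext_iff] at this
    
lemma walk_support_mem {S : Set Site} {x y : Site} (hx : x ∈ S) (q : (GS S).Walk x y) :
    ∀ z ∈ q.support, z ∈ S := by
  induction q with
  | nil => intro z hz; simp at hz; subst hz; exact hx
  | cons h q ih =>
    intro z hz
    rw [SimpleGraph.Walk.support_cons] at hz
    rcases List.mem_cons.1 hz with h1 | h2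
    · subst h1; exact h.2.1
    · exact ih h.2.2.1 z h2

lemma list_to_connIn {S : Set Site} (l : List Site) (hne : l ≠ [])
    (hnd : l.Nodup) (hch : List.Chain' adjStar l) (hmem : ∀ z ∈ l, z ∈ S) :
    ConnIn S adjStar (l.head hne) (l.getLast hne) := by
  obtain ⟨k, hk⟩ : ∃ k, l.length = k + 1 := by
    cases l with
    | nil => exact absurd rfl hne
    | cons a l => exact ⟨l.length, by simp⟩
  refine ⟨k, fun i => l.get (Fin.cast hk.symm i), ?_, ?_, ?_, ?_, ?_⟩
  · rw [List.head_eq_getElem_zero hne]; simp [List.get_eq_getElem]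
  · rw [List.getLast_eq_getElem]; simp [List.get_eq_getElem, Fin.last, hk]
  · intro a b hab
    have := List.nodup_iff_injective_get.1 hnd hab
    exact Fin.cast_injective _ (by exact this)
  · intro i
    have := List.isChain_iff_getElem.1 hch i (by omega)
    simpa [List.get_eq_getElem, Fin.castSucc, Fin.succ] using this
  · intro i; exact hmem _ (l.get_mem _)

lemma reach_to_connIn {S : Set Site} {x y : Site} (hx : x ∈ S) (h : Reach S x y) :
    ConnIn S adjStar x y := by
  obtain ⟨w⟩ := h
  classical
  obtain ⟨q, hq⟩ := w.toPath
  have hsup : q.support.Nodup := hq.support_nodup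
  have hch : List.Chain' adjStar q.support := by
    have := q.isChain_adj_support
    exact List.IsChain.imp (fun a b hab => hab.2.2.2) this
  have := list_to_connIn q.support q.support_ne_nil hsup hch (walk_support_mem hx q)
  simpa using this


/-! ### Dynamics basics -/

lemma evolve_succ (ω : Config) (n : ℕ) : evolve ω (n+1) = step (evolve ω n) := rfl

lemma evolve_mono (ω : Config) {t t' : ℕ} (h : t ≤ t') {z : Site}
    (hz : evolve ω t z = true) : evolve ω t' z = true := by
  induction t' with
  | zero => exact (Nat.le_zero.1 h) ▸ hz
  | succ n ih =>
    rcases Nat.lt_or_ge t (n+1) with h1 | h1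
    · have := ih (by omega)
      rw [evolve_succ]
      simp [step, this]
    · have : t = n + 1 := by omega
      exact this ▸ hz

lemma open_final {ω : Config} {z : Site} {t : ℕ} (h : evolve ω t z = true) :
    finalOpen ω z := ⟨t, h⟩

lemma mem_nbrs_adjStar {u w : Site} (h : w ∈ nbrs u) : adjStar w u := by
  simp only [nbrs, Finset.mem_insert, Finset.mem_singleton] at h
  rcases h with h | h | h | h <;> subst h <;>
    refine ⟨?_, ?_, ?_⟩ <;> simp [Prod.ext_iff] <;> omega

lemma nbrs_card (u : Site) : (nbrs u).card = 4 := by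
  simp only [nbrs]
  rw [Finset.card_insert_of_notMem (by simp [Prod.ext_iff] <;> omega),
    Finset.card_insert_of_notMem (by simp [Prod.ext_iff] <;> omega),
    Finset.card_insert_of_notMem (by simp [Prod.ext_iff] <;> omega)]
  rfl

lemma new_site {ω : Config} {t : ℕ} {u : Site} (h1 : evolve ω (t+1) u = true)
    (h0 : evolve ω t u = false) :
    3 ≤ ((nbrs u).filter fun y => evolve ω t y = true).card := by
  rw [evolve_succ] at h1
  simp [step, h0] at h1
  exact h1

lemma amoc {σ : Config} {u : Site} (h3 : 3 ≤ ((nbrs u).filter fun y => σ y = true).card)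
    {a b : Site} (ha : a ∈ nbrs u) (hb : b ∈ nbrs u) (hab : a ≠ b) :
    σ a = true ∨ σ b = true := by
  by_contra hcon
  push_neg at hcon
  obtain ⟨ha', hb'⟩ := hcon
  have hsub : ((nbrs u).filter fun y => σ y = true) ⊆ (nbrs u) \ {a, b} := by
    intro z hz
    rw [Finset.mem_filter] at hz
    rw [Finset.mem_sdiff]
    refine ⟨hz.1, ?_⟩
    simp only [Finset.mem_insert, Finset.mem_singleton]
    rintro (rfl | rfl)
    · exact ha' hz.2
    · exact hb' hz.2
  have hcard := Finset.card_le_card hsub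
  have : ((nbrs u) \ {a, b}).card ≤ 2 := by
    have h2 : ({a, b} : Finset Site).card = 2 := by
      rw [Finset.card_insert_of_notMem (by simpa using hab), Finset.card_singleton]
    have hsub2 : ({a, b} : Finset Site) ⊆ nbrs u := by
      intro z hz; simp only [Finset.mem_insert, Finset.mem_singleton] at hz
      rcases hz with rfl | rfl <;> assumption
    rw [Finset.card_sdiff_of_subset hsub2, nbrs_card, h2]
  omega

lemma exists_open_nbr {σ : Config} {u : Site}
    (h3 : 3 ≤ ((nbrs u).filter fun y => σ y = true).card) :
    ∃ w ∈ nbrs u, σ w = true := by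
  have : 0 < ((nbrs u).filter fun y => σ y = true).card := by omega
  obtain ⟨w, hw⟩ := Finset.card_pos.1 this
  rw [Finset.mem_filter] at hw
  exact ⟨w, hw.1, hw.2⟩

/-! ### Local connectivity around a newly opened site -/

lemma rs {σ : Config} {x y : Site} (hx : σ x = true) (hy : σ y = true)
    (h : adjStar x y) : Reach {z | σ z = true} x y :=
  SimpleGraph.Adj.reachable ⟨h.1, hx, hy, h⟩

lemma adjStar_mk (x1 x2 y1 y2 : ℤ)
    (h : ¬(x1 = y1 ∧ x2 = y2) ∧ -1 ≤ x1 - y1 ∧ x1 - y1 ≤ 1 ∧ -1 ≤ x2 - y2 ∧ x2 - y2 ≤ 1) :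
    adjStar (x1, x2) (y1, y2) := by
  refine ⟨?_, ?_, ?_⟩
  · simp only [Ne, Prod.mk.injEq]; exact h.1
  · simp only; omega
  · simp only; omega

lemma mem_nbrs_E (p q : ℤ) : ((p+1, q) : Site) ∈ nbrs (p, q) := by simp [nbrs]
lemma mem_nbrs_W (p q : ℤ) : ((p-1, q) : Site) ∈ nbrs (p, q) := by simp [nbrs]
lemma mem_nbrs_N (p q : ℤ) : ((p, q+1) : Site) ∈ nbrs (p, q) := by simp [nbrs]
lemma mem_nbrs_S (p q : ℤ) : ((p, q-1) : Site) ∈ nbrs (p, q) := by simp [nbrs]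

lemma to_hub {σ : Config} {p q : ℤ}
    (h3 : 3 ≤ ((nbrs ((p, q) : Site)).filter fun y => σ y = true).card)
    {a : Site} (ha : adjStar a (p, q)) (hA : σ a = true) :
    Reach {z | σ z = true} a (if σ (p, q+1) = true then (p, q+1) else (p, q-1)) := by
  have hNS := amoc h3 (mem_nbrs_N p q) (mem_nbrs_S p q) (by simp only [Ne, Prod.mk.injEq, not_and]; intro h; omega)
  have hEW := amoc h3 (mem_nbrs_E p q) (mem_nbrs_W p q) (by simp only [Ne, Prod.mk.injEq, not_and]; intro h; omega)
  have hNE := amoc h3 (mem_nbrs_N p q) (mem_nbrs_E p q) (by simp only [Ne, Prod.mk.injEq, not_and]; intro h; omega)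
  have hNW := amoc h3 (mem_nbrs_N p q) (mem_nbrs_W p q) (by simp only [Ne, Prod.mk.injEq, not_and]; intro h; omega)
  have hES := amoc h3 (mem_nbrs_E p q) (mem_nbrs_S p q) (by simp only [Ne, Prod.mk.injEq, not_and]; intro h; omega)
  have hWS := amoc h3 (mem_nbrs_W p q) (mem_nbrs_S p q) (by simp only [Ne, Prod.mk.injEq, not_and]; intro h; omega)
  obtain ⟨a1, a2⟩ := a
  obtain ⟨hne, h1, h2⟩ := ha
  simp only at h1 h2
  have ha1 : a1 = p - 1 ∨ a1 = p ∨ a1 = p + 1 := by omega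
  have ha2 : a2 = q - 1 ∨ a2 = q ∨ a2 = q + 1 := by omega
  by_cases hN : σ (p, q+1) = true
  · -- hub is N
    simp only [hN, if_true]
    rcases ha1 with rfl | rfl | rfl <;> rcases ha2 with rfl | rfl | rfl
    · -- SW corner (p-1, q-1) : if W open go via W, else E,S open, go S, E, N
      by_cases hW : σ (p-1, q) = true
      · exact (rs hA hW (adjStar_mk _ _ _ _ (by omega))).trans
          (rs hW hN (adjStar_mk _ _ _ _ (by omega)))
      · have hE : σ (p+1, q) = true := hEW.resolve_right hW
        have hS : σ (p, q-1) = true := hWS.resolve_left hW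
        exact ((rs hA hS (adjStar_mk _ _ _ _ (by omega))).trans
          (rs hS hE (adjStar_mk _ _ _ _ (by omega)))).trans
          (rs hE hN (adjStar_mk _ _ _ _ (by omega)))
    · -- W
      exact rs hA hN (adjStar_mk _ _ _ _ (by omega))
    · -- NW corner
      exact rs hA hN (adjStar_mk _ _ _ _ (by omega))
    · -- S
      rcases hEW with hE | hW
      · exact (rs hA hE (adjStar_mk _ _ _ _ (by omega))).trans
          (rs hE hN (adjStar_mk _ _ _ _ (by omega)))
      · exact (rs hA hW (adjStar_mk _ _ _ _ (by omega))).trans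
          (rs hW hN (adjStar_mk _ _ _ _ (by omega)))
    · -- center: impossible
      exact absurd rfl hne
    · -- N itself
      exact SimpleGraph.Reachable.refl _
    · -- SE corner
      by_cases hE : σ (p+1, q) = true
      · exact (rs hA hE (adjStar_mk _ _ _ _ (by omega))).trans
          (rs hE hN (adjStar_mk _ _ _ _ (by omega)))
      · have hW : σ (p-1, q) = true := hEW.resolve_left hE
        have hS : σ (p, q-1) = true := hES.resolve_left hE
        exact ((rs hA hS (adjStar_mk _ _ _ _ (by omega))).trans
          (rs hS hW (adjStar_mk _ _ _ _ (by omega)))).trans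
          (rs hW hN (adjStar_mk _ _ _ _ (by omega)))
    · -- E
      exact rs hA hN (adjStar_mk _ _ _ _ (by omega))
    · -- NE corner
      exact rs hA hN (adjStar_mk _ _ _ _ (by omega))
  · -- hub is S; here N is closed so E, W, S are all open
    have hS : σ (p, q-1) = true := hNS.resolve_left hN
    have hE : σ (p+1, q) = true := hNE.resolve_left hN
    have hW : σ (p-1, q) = true := hNW.resolve_left hN
    simp only [hN, if_false]
    rcases ha1 with rfl | rfl | rfl <;> rcases ha2 with rfl | rfl | rfl
    · exact rs hA hS (adjStar_mk _ _ _ _ (by omega))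
    · exact rs hA hS (adjStar_mk _ _ _ _ (by omega))
    · exact (rs hA hW (adjStar_mk _ _ _ _ (by omega))).trans
        (rs hW hS (adjStar_mk _ _ _ _ (by omega)))
    · exact SimpleGraph.Reachable.refl _
    · exact absurd rfl hne
    · exact absurd hA (by simp [hN])
    · exact rs hA hS (adjStar_mk _ _ _ _ (by omega))
    · exact rs hA hS (adjStar_mk _ _ _ _ (by omega))
    · exact (rs hA hE (adjStar_mk _ _ _ _ (by omega))).trans
        (rs hE hS (adjStar_mk _ _ _ _ (by omega)))

lemma local_conn {σ : Config} {v : Site}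
    (h3 : 3 ≤ ((nbrs v).filter fun y => σ y = true).card)
    {a b : Site} (ha : adjStar a v) (hA : σ a = true) (hb : adjStar b v) (hB : σ b = true) :
    Reach {z | σ z = true} a b := by
  obtain ⟨p, q⟩ := v
  exact (to_hub h3 ha hA).trans (to_hub h3 hb hB).symm

/-! ### Anchors -/

noncomputable def anchorAt (ω : Config) (t : ℕ) (u : Site) : Site :=
  if evolve ω t u = true then u
  else if h : ∃ w ∈ nbrs u, evolve ω t w = true then h.choose else u

lemma anchorAt_of_open {ω : Config} {t : ℕ} {u : Site} (h : evolve ω t u = true) :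
    anchorAt ω t u = u := by simp [anchorAt, h]

lemma anchorAt_of_new {ω : Config} {t : ℕ} {u : Site} (hu : evolve ω (t+1) u = true)
    (h0 : evolve ω t u = false) :
    anchorAt ω t u ∈ nbrs u ∧ evolve ω t (anchorAt ω t u) = true := by
  have h3 := new_site hu h0
  have hex : ∃ w ∈ nbrs u, evolve ω t w = true := exists_open_nbr h3
  have heq : anchorAt ω t u = hex.choose := by
    rw [anchorAt, if_neg (by simp [h0]), dif_pos hex]
  rw [heq]
  exact ⟨hex.choose_spec.1, hex.choose_spec.2⟩

lemma anchorAt_open {ω : Config} {t : ℕ} {u : Site} (hu : evolve ω (t+1) u = true) :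
    evolve ω t (anchorAt ω t u) = true := by
  by_cases h0 : evolve ω t u = true
  · rw [anchorAt_of_open h0]; exact h0
  · exact (anchorAt_of_new hu (by simpa using h0)).2

lemma anchorAt_adjStar_self {ω : Config} {t : ℕ} {u : Site} (hu : evolve ω (t+1) u = true)
    (h0 : evolve ω t u = false) : adjStar (anchorAt ω t u) u :=
  mem_nbrs_adjStar (anchorAt_of_new hu h0).1

/-- The crucial one-step lemma: anchors of `*`-adjacent open sites at time `t+1`
are connected at time `t`. -/
lemma step_adj {ω : Config} {t : ℕ} {u v : Site}
    (hu : evolve ω (t+1) u = true) (hv : evolve ω (t+1) v = true) (huv : adjStar u v) :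
    Reach {z | evolve ω t z = true} (anchorAt ω t u) (anchorAt ω t v) := by
  by_cases hu0 : evolve ω t u = true <;> by_cases hv0 : evolve ω t v = true
  · rw [anchorAt_of_open hu0, anchorAt_of_open hv0]
    exact rs hu0 hv0 huv
  · -- u old, v new
    rw [anchorAt_of_open hu0]
    replace hv0 : evolve ω t v = false := by simpa using hv0
    have h3v := new_site hv hv0
    obtain ⟨hmem, hopen⟩ := anchorAt_of_new hv hv0
    exact local_conn h3v huv hu0 (mem_nbrs_adjStar hmem) hopen
  · -- u new, v old
    rw [anchorAt_of_open hv0]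
    replace hu0 : evolve ω t u = false := by simpa using hu0
    have h3u := new_site hu hu0
    obtain ⟨hmem, hopen⟩ := anchorAt_of_new hu hu0
    exact (local_conn h3u (adjStar_symm huv) hv0 (mem_nbrs_adjStar hmem) hopen).symm
  · -- both new
    replace hu0 : evolve ω t u = false := by simpa using hu0
    replace hv0 : evolve ω t v = false := by simpa using hv0
    have h3u := new_site hu hu0
    have h3v := new_site hv hv0
    have hanchu := anchorAt_of_new hu hu0
    have hanchv := anchorAt_of_new hv hv0
    obtain ⟨p, q⟩ := u
    obtain ⟨v1, v2⟩ := v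
    obtain ⟨hne, h1, h2⟩ := huv
    simp only at h1 h2
    have key : ∀ w1 w2 : Site, w1 ∈ nbrs (p,q) → evolve ω t w1 = true → w2 ∈ nbrs (v1,v2) →
        evolve ω t w2 = true → (w1 = w2 ∨ adjStar w1 w2) →
        Reach {z | evolve ω t z = true} (anchorAt ω t (p,q)) (anchorAt ω t (v1,v2)) := by
      intro w1 w2 hw1m hw1 hw2m hw2 hww
      have r1 : Reach {z | evolve ω t z = true} (anchorAt ω t (p,q)) w1 :=
        local_conn h3u (mem_nbrs_adjStar hanchu.1) hanchu.2 (mem_nbrs_adjStar hw1m) hw1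
      have r3 : Reach {z | evolve ω t z = true} w2 (anchorAt ω t (v1,v2)) :=
        local_conn h3v (mem_nbrs_adjStar hw2m) hw2 (mem_nbrs_adjStar hanchv.1) hanchv.2
      refine r1.trans (SimpleGraph.Reachable.trans ?_ r3)
      rcases hww with rfl | hadj
      · exact SimpleGraph.Reachable.refl _
      · exact rs hw1 hw2 hadj
    have hv1 : p - 1 = v1 ∨ p = v1 ∨ p + 1 = v1 := by omega
    have hv2 : q - 1 = v2 ∨ q = v2 ∨ q + 1 = v2 := by omega
    have hmm : ∀ a b : ℤ, ((a, b) : Site) ∈ nbrs (a+1, b) ∧ ((a, b) : Site) ∈ nbrs (a-1, b)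
        ∧ ((a, b) : Site) ∈ nbrs (a, b+1) ∧ ((a, b) : Site) ∈ nbrs (a, b-1) := by
      intro a b
      refine ⟨?_, ?_, ?_, ?_⟩ <;>
        simp only [nbrs, Finset.mem_insert, Finset.mem_singleton, Prod.mk.injEq, and_true, true_and, or_true, true_or] <;> omega
    rcases hv1 with rfl | rfl | rfl <;> rcases hv2 with rfl | rfl | rfl
    · -- v = (p-1, q-1): shared nbrs (p-1,q), (p,q-1)
      rcases amoc h3u (mem_nbrs_W p q) (mem_nbrs_S p q)
        (by simp only [Ne, Prod.mk.injEq, not_and]; intro h; omega) with hW | hS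
      · refine key (p-1, q) (p-1, q) (mem_nbrs_W p q) hW ?_ hW (Or.inl rfl)
        have := (hmm (p-1) q).2.2.2
        simpa using this
      · refine key (p, q-1) (p, q-1) (mem_nbrs_S p q) hS ?_ hS (Or.inl rfl)
        have := (hmm p (q-1)).2.1
        simpa using this
    · -- v = (p-1, q): straight W; N_u and N_v open
      have hNu : evolve ω t (p, q+1) = true := by
        rcases amoc h3u (mem_nbrs_N p q) (mem_nbrs_W p q)
          (by simp only [Ne, Prod.mk.injEq, not_and]; intro h; omega) with h | h
        · exact h
        · rw [h] at hv0; simp at hv0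
      have hNv : evolve ω t (p-1, q+1) = true := by
        rcases amoc h3v (mem_nbrs_N (p-1) q) (mem_nbrs_E (p-1) q)
          (by simp only [Ne, Prod.mk.injEq, not_and]; intro h; omega) with h | h
        · exact h
        · rw [show ((p:ℤ)-1)+1 = p from by ring] at h; rw [h] at hu0; simp at hu0
      exact key (p, q+1) (p-1, q+1) (mem_nbrs_N p q) hNu (mem_nbrs_N (p-1) q) hNv
        (Or.inr (adjStar_mk _ _ _ _ (by omega)))
    · -- v = (p-1, q+1): shared nbrs (p-1,q), (p,q+1)
      rcases amoc h3u (mem_nbrs_W p q) (mem_nbrs_N p q)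
        (by simp only [Ne, Prod.mk.injEq, not_and]; intro h; omega) with hW | hN
      · refine key (p-1, q) (p-1, q) (mem_nbrs_W p q) hW ?_ hW (Or.inl rfl)
        have := (hmm (p-1) q).2.2.1
        simpa using this
      · refine key (p, q+1) (p, q+1) (mem_nbrs_N p q) hN ?_ hN (Or.inl rfl)
        have := (hmm p (q+1)).2.1
        simpa using this
    · -- v = (p, q-1): straight S: E_u and E_v open
      have hEu : evolve ω t (p+1, q) = true := by
        rcases amoc h3u (mem_nbrs_E p q) (mem_nbrs_S p q)
          (by simp only [Ne, Prod.mk.injEq, not_and]; intro h; omega) with h | h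
        · exact h
        · rw [h] at hv0; simp at hv0
      have hEv : evolve ω t (p+1, q-1) = true := by
        rcases amoc h3v (mem_nbrs_E p (q-1)) (mem_nbrs_N p (q-1))
          (by simp only [Ne, Prod.mk.injEq, not_and]; intro h; omega) with h | h
        · exact h
        · rw [show ((q:ℤ)-1)+1 = q from by ring] at h; rw [h] at hu0; simp at hu0
      exact key (p+1, q) (p+1, q-1) (mem_nbrs_E p q) hEu (mem_nbrs_E p (q-1)) hEv
        (Or.inr (adjStar_mk _ _ _ _ (by omega)))
    · -- v = u : impossible
      exact absurd rfl hne
    · -- v = (p, q+1): straight N: E_u and E_v open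
      have hEu : evolve ω t (p+1, q) = true := by
        rcases amoc h3u (mem_nbrs_E p q) (mem_nbrs_N p q)
          (by simp only [Ne, Prod.mk.injEq, not_and]; intro h; omega) with h | h
        · exact h
        · rw [h] at hv0; simp at hv0
      have hEv : evolve ω t (p+1, q+1) = true := by
        rcases amoc h3v (mem_nbrs_E p (q+1)) (mem_nbrs_S p (q+1))
          (by simp only [Ne, Prod.mk.injEq, not_and]; intro h; omega) with h | h
        · exact h
        · rw [show ((q:ℤ)+1)-1 = q from by ring] at h; rw [h] at hu0; simp at hu0
      exact key (p+1, q) (p+1, q+1) (mem_nbrs_E p q) hEu (mem_nbrs_E p (q+1)) hEv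
        (Or.inr (adjStar_mk _ _ _ _ (by omega)))
    · -- v = (p+1, q-1): shared nbrs (p+1,q), (p,q-1)
      rcases amoc h3u (mem_nbrs_E p q) (mem_nbrs_S p q)
        (by simp only [Ne, Prod.mk.injEq, not_and]; intro h; omega) with hE | hS
      · refine key (p+1, q) (p+1, q) (mem_nbrs_E p q) hE ?_ hE (Or.inl rfl)
        have := (hmm (p+1) q).2.2.2
        simpa using this
      · refine key (p, q-1) (p, q-1) (mem_nbrs_S p q) hS ?_ hS (Or.inl rfl)
        have := (hmm p (q-1)).1
        simpa using this
    · -- v = (p+1, q): straight E: N_u and N_v open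
      have hNu : evolve ω t (p, q+1) = true := by
        rcases amoc h3u (mem_nbrs_N p q) (mem_nbrs_E p q)
          (by simp only [Ne, Prod.mk.injEq, not_and]; intro h; omega) with h | h
        · exact h
        · rw [h] at hv0; simp at hv0
      have hNv : evolve ω t (p+1, q+1) = true := by
        rcases amoc h3v (mem_nbrs_N (p+1) q) (mem_nbrs_W (p+1) q)
          (by simp only [Ne, Prod.mk.injEq, not_and]; intro h; omega) with h | h
        · exact h
        · rw [show ((p:ℤ)+1)-1 = p from by ring] at h; rw [h] at hu0; simp at hu0
      exact key (p, q+1) (p+1, q+1) (mem_nbrs_N p q) hNu (mem_nbrs_N (p+1) q) hNv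
        (Or.inr (adjStar_mk _ _ _ _ (by omega)))
    · -- v = (p+1, q+1): shared nbrs (p+1,q), (p,q+1)
      rcases amoc h3u (mem_nbrs_E p q) (mem_nbrs_N p q)
        (by simp only [Ne, Prod.mk.injEq, not_and]; intro h; omega) with hE | hN
      · refine key (p+1, q) (p+1, q) (mem_nbrs_E p q) hE ?_ hE (Or.inl rfl)
        have := (hmm (p+1) q).2.2.1
        simpa using this
      · refine key (p, q+1) (p, q+1) (mem_nbrs_N p q) hN ?_ hN (Or.inl rfl)
        have := (hmm p (q+1)).1
        simpa using this

/-! ### Descent to time 0 -/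

lemma step_reach {ω : Config} {t : ℕ} {u v : Site}
    (h : Reach {z | evolve ω (t+1) z = true} u v) :
    Reach {z | evolve ω t z = true} (anchorAt ω t u) (anchorAt ω t v) := by
  obtain ⟨w⟩ := h
  induction w with
  | nil => exact SimpleGraph.Reachable.refl _
  | cons h p ih =>
    exact (step_adj h.2.1 h.2.2.1 h.2.2.2).trans ih

noncomputable def desc (ω : Config) : ℕ → Site → Site
  | 0, u => u
  | (t+1), u => desc ω t (anchorAt ω t u)

lemma desc_open {ω : Config} : ∀ {n : ℕ} {u : Site}, evolve ω n u = true →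
    ω (desc ω n u) = true := by
  intro n
  induction n with
  | zero => intro u h; exact h
  | succ t ih => intro u h; exact ih (anchorAt_open h)

lemma desc_reach {ω : Config} : ∀ {n : ℕ} {u v : Site},
    Reach {z | evolve ω n z = true} u v →
    Reach {z | ω z = true} (desc ω n u) (desc ω n v) := by
  intro n
  induction n with
  | zero => intro u v h; exact h
  | succ t ih => intro u v h; exact ih (step_reach h)

lemma desc_of_open0 {ω : Config} {u : Site} (h : ω u = true) (n : ℕ) :
    desc ω n u = u := by
  induction n with
  | zero => rfl
  | succ t ih =>
    show desc ω t (anchorAt ω t u) = u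
    rw [anchorAt_of_open (evolve_mono ω (Nat.zero_le t) h), ih]

lemma desc_stable {ω : Config} {u : Site} {s : ℕ} (h : evolve ω s u = true) :
    ∀ n, s ≤ n → desc ω n u = desc ω s u := by
  intro n
  induction n with
  | zero => intro h0; rw [Nat.le_zero.1 h0]
  | succ t ih =>
    intro hst
    rcases Nat.lt_or_ge s (t+1) with h1 | h1
    · show desc ω t (anchorAt ω t u) = _
      rw [anchorAt_of_open (evolve_mono ω (by omega) h), ih (by omega)]
    · have : s = t + 1 := by omega
      rw [this]

/-! ### Card bound helper and ring stability -/

lemma filter_card_le_two {σ : Config} {u r1 r2 : Site} (h1 : r1 ∈ nbrs u)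
    (h2 : r2 ∈ nbrs u) (hne : r1 ≠ r2) (hc1 : σ r1 = false) (hc2 : σ r2 = false) :
    ((nbrs u).filter fun y => σ y = true).card ≤ 2 := by
  have hsub : ((nbrs u).filter fun y => σ y = true) ⊆ (nbrs u) \ {r1, r2} := by
    intro z hz
    rw [Finset.mem_filter] at hz
    rw [Finset.mem_sdiff]
    refine ⟨hz.1, ?_⟩
    simp only [Finset.mem_insert, Finset.mem_singleton]
    rintro (rfl | rfl)
    · rw [hz.2] at hc1; exact absurd hc1 (by simp)
    · rw [hz.2] at hc2; exact absurd hc2 (by simp)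
  have hcard := Finset.card_le_card hsub
  have h2' : ({r1, r2} : Finset Site).card = 2 := by
    rw [Finset.card_insert_of_notMem (by simpa using hne), Finset.card_singleton]
  have hsub2 : ({r1, r2} : Finset Site) ⊆ nbrs u := by
    intro z hz; simp only [Finset.mem_insert, Finset.mem_singleton] at hz
    rcases hz with rfl | rfl <;> assumption
  rw [Finset.card_sdiff_of_subset hsub2, nbrs_card, h2'] at hcard
  omega

lemma ring_stable {ω : Config} (h : ∀ w : Site, adjStar (0,0) w → ω w = false) :
    ∀ (t : ℕ) (w : Site), adjStar (0,0) w → evolve ω t w = false := by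
  intro t
  induction t with
  | zero => exact fun w hw => h w hw
  | succ t ih =>
    intro w hw
    have hclosed := ih w hw
    rw [evolve_succ]
    simp only [step, hclosed, Bool.false_or]
    rw [decide_eq_false_iff_not]
    have hring : ∀ a b : ℤ, -1 ≤ a → a ≤ 1 → -1 ≤ b → b ≤ 1 → ¬(a = 0 ∧ b = 0) →
        evolve ω t (a, b) = false := by
      intro a b h1 h2 h3 h4 h5
      refine ih (a, b) ⟨?_, ?_, ?_⟩
      · simp only [Ne, Prod.mk.injEq, not_and]
        intro hh; omega
      · simp only; omega
      · simp only; omega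
    obtain ⟨w1, w2⟩ := w
    obtain ⟨hne, hb1, hb2⟩ := hw
    simp only at hb1 hb2
    have hw1 : (0:ℤ) - 1 = w1 ∨ (0:ℤ) = w1 ∨ (0:ℤ) + 1 = w1 := by omega
    have hw2 : (0:ℤ) - 1 = w2 ∨ (0:ℤ) = w2 ∨ (0:ℤ) + 1 = w2 := by omega
    have hmem : ∀ a b c d : ℤ, (a - c = 1 ∧ b = d) ∨ (c - a = 1 ∧ b = d) ∨
        (a = c ∧ b - d = 1) ∨ (a = c ∧ d - b = 1) → ((a,b) : Site) ∈ nbrs (c, d) := by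
      intro a b c d hh
      simp only [nbrs, Finset.mem_insert, Finset.mem_singleton, Prod.mk.injEq]
      omega
    intro hcon
    rcases hw1 with rfl | rfl | rfl <;> rcases hw2 with rfl | rfl | rfl
    · -- (-1,-1): ring nbrs (-1,0), (0,-1)
      have := filter_card_le_two (σ := evolve ω t) (hmem (-1) 0 (0-1) (0-1) (by omega))
        (hmem 0 (-1) (0-1) (0-1) (by omega))
        (by simp [Prod.ext_iff]) (hring (-1) 0 (by omega) (by omega) (by omega) (by omega) (by omega))
        (hring 0 (-1) (by omega) (by omega) (by omega) (by omega) (by omega))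
      omega
    · -- (-1,0): ring nbrs (-1,1), (-1,-1)
      have := filter_card_le_two (σ := evolve ω t) (hmem (-1) 1 (0-1) 0 (by omega))
        (hmem (-1) (-1) (0-1) 0 (by omega))
        (by simp [Prod.ext_iff]) (hring (-1) 1 (by omega) (by omega) (by omega) (by omega) (by omega))
        (hring (-1) (-1) (by omega) (by omega) (by omega) (by omega) (by omega))
      omega
    · -- (-1,1): ring nbrs (-1,0), (0,1)
      have := filter_card_le_two (σ := evolve ω t) (hmem (-1) 0 (0-1) (0+1) (by omega))
        (hmem 0 1 (0-1) (0+1) (by omega))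
        (by simp [Prod.ext_iff]) (hring (-1) 0 (by omega) (by omega) (by omega) (by omega) (by omega))
        (hring 0 1 (by omega) (by omega) (by omega) (by omega) (by omega))
      omega
    · -- (0,-1): ring nbrs (1,-1), (-1,-1)
      have := filter_card_le_two (σ := evolve ω t) (hmem 1 (-1) 0 (0-1) (by omega))
        (hmem (-1) (-1) 0 (0-1) (by omega))
        (by simp [Prod.ext_iff]) (hring 1 (-1) (by omega) (by omega) (by omega) (by omega) (by omega))
        (hring (-1) (-1) (by omega) (by omega) (by omega) (by omega) (by omega))
      omega
    · -- (0,0): not in ring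
      exact absurd rfl hne
    · -- (0,1): ring nbrs (1,1), (-1,1)
      have := filter_card_le_two (σ := evolve ω t) (hmem 1 1 0 (0+1) (by omega))
        (hmem (-1) 1 0 (0+1) (by omega))
        (by simp [Prod.ext_iff]) (hring 1 1 (by omega) (by omega) (by omega) (by omega) (by omega))
        (hring (-1) 1 (by omega) (by omega) (by omega) (by omega) (by omega))
      omega
    · -- (1,-1): ring nbrs (1,0), (0,-1)
      have := filter_card_le_two (σ := evolve ω t) (hmem 1 0 (0+1) (0-1) (by omega))
        (hmem 0 (-1) (0+1) (0-1) (by omega))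
        (by simp [Prod.ext_iff]) (hring 1 0 (by omega) (by omega) (by omega) (by omega) (by omega))
        (hring 0 (-1) (by omega) (by omega) (by omega) (by omega) (by omega))
      omega
    · -- (1,0): ring nbrs (1,1), (1,-1)
      have := filter_card_le_two (σ := evolve ω t) (hmem 1 1 (0+1) 0 (by omega))
        (hmem 1 (-1) (0+1) 0 (by omega))
        (by simp [Prod.ext_iff]) (hring 1 1 (by omega) (by omega) (by omega) (by omega) (by omega))
        (hring 1 (-1) (by omega) (by omega) (by omega) (by omega) (by omega))
      omega
    · -- (1,1): ring nbrs (1,0), (0,1)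
      have := filter_card_le_two (σ := evolve ω t) (hmem 1 0 (0+1) (0+1) (by omega))
        (hmem 0 1 (0+1) (0+1) (by omega))
        (by simp [Prod.ext_iff]) (hring 1 0 (by omega) (by omega) (by omega) (by omega) (by omega))
        (hring 0 1 (by omega) (by omega) (by omega) (by omega) (by omega))
      omega

/-! ### The main deterministic lemma -/

lemma connIn_mono {S T : Set Site} (hST : S ⊆ T) {x y : Site}
    (h : ConnIn S adjStar x y) : ConnIn T adjStar x y := by
  obtain ⟨k, π, h1, h2, h3, h4, h5⟩ := h
  exact ⟨k, π, h1, h2, h3, h4, fun i => hST (h5 i)⟩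

lemma infCluster_mono {S T : Set Site} (hST : S ⊆ T) {x : Site}
    (h : InfClusterIn S adjStar x) : InfClusterIn T adjStar x := by
  refine ⟨hST h.1, h.2.mono ?_⟩
  intro y hy
  exact connIn_mono hST hy

lemma main_det {ω : Config} (H : InfClusterIn {z | finalOpen ω z} adjStar ((0,0) : Site)) :
    ∃ w : Site, adjStar (0,0) w ∧ ω w = true ∧
      {y | ConnIn {z : Site | ω z = true ∧ z ≠ (0,0)} adjStar w y}.Infinite := by
  classical
  have h0fin : finalOpen ω (0,0) := H.1
  set Sfin := {z | finalOpen ω z} with hSfin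
  -- the final cluster of the origin (in reachability form)
  set K := {y | Reach Sfin (0,0) y} with hK
  have hKinf : K.Infinite := by
    refine H.2.mono ?_
    intro y hy
    exact connIn_to_reach hy
  -- opening time of the origin and its time-0 ancestor
  set t₀ := Nat.find h0fin with ht₀def
  have ht₀ : evolve ω t₀ (0,0) = true := Nat.find_spec h0fin
  set astar := desc ω t₀ (0,0) with hastardef
  have hastar : ω astar = true := desc_open ht₀
  -- every finally-reachable time-0-open site is in the time-0 cluster of astar
  have claim1 : ∀ u : Site, ω u = true → Reach Sfin (0,0) u →
      Reach {z | ω z = true} astar u := by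
    intro u hu hreach
    have hconn := reach_to_connIn (show ((0,0) : Site) ∈ Sfin from h0fin) hreach
    obtain ⟨k, π, hπ0, hπl, hinj, hadj, hmem⟩ := hconn
    -- a common time at which the whole path is open
    set n := (Finset.univ.sup fun i : Fin (k+1) => Nat.find (hmem i)) ⊔ t₀ with hn
    have hmem' : ∀ i, evolve ω n (π i) = true := by
      intro i
      refine evolve_mono ω ?_ (Nat.find_spec (hmem i))
      calc Nat.find (hmem i) ≤ Finset.univ.sup fun i : Fin (k+1) => Nat.find (hmem i) :=
            Finset.le_sup (f := fun i : Fin (k+1) => Nat.find (hmem i)) (Finset.mem_univ i)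
        _ ≤ n := le_sup_left
    have hreachn : Reach {z | evolve ω n z = true} ((0,0) : Site) u := by
      refine connIn_to_reach (x := (0,0)) (y := u) ⟨k, π, hπ0, hπl, hinj, hadj, hmem'⟩
    have := desc_reach hreachn
    rwa [desc_of_open0 hu n, desc_stable ht₀ n le_sup_right, ← hastardef] at this
  -- neighbours of finally-reachable finally-open sites are finally reachable
  have claim_nbr : ∀ u w : Site, Reach Sfin (0,0) u → finalOpen ω u → w ∈ nbrs u →
      finalOpen ω w → Reach Sfin (0,0) w := by
    intro u w hu hufin hw hwfin
    refine hu.trans (SimpleGraph.Adj.reachable ?_)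
    have haux := mem_nbrs_adjStar hw
    exact ⟨haux.1.symm, hufin, hwfin, adjStar_symm haux⟩
  -- the time-0 cluster of astar
  set C := {y | Reach {z | ω z = true} astar y} with hC
  have hCinf : C.Infinite := by
    by_contra hCfin
    rw [Set.not_infinite] at hCfin
    -- a bound for C
    set m := hCfin.toFinset.sup fun z => z.1.natAbs ⊔ z.2.natAbs with hm
    have hbound : ∀ z ∈ C, z.1.natAbs ≤ m ∧ z.2.natAbs ≤ m := by
      intro z hz
      have hz' : z ∈ hCfin.toFinset := hCfin.mem_toFinset.2 hz
      have h2 : z.1.natAbs ⊔ z.2.natAbs ≤ m :=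
        Finset.le_sup (f := fun z : Site => z.1.natAbs ⊔ z.2.natAbs) hz'
      exact ⟨le_trans le_sup_left h2, le_trans le_sup_right h2⟩
    -- all finally-reachable sites lie in the box
    have hbox : ∀ (t : ℕ) (u : Site), Reach Sfin (0,0) u → evolve ω t u = true →
        u.1.natAbs ≤ m ∧ u.2.natAbs ≤ m := by
      intro t
      induction t with
      | zero => intro u hu h0; exact hbound u (claim1 u h0 hu)
      | succ t ih =>
        intro u hu h1
        by_cases h0 : evolve ω t u = true
        · exact ih u hu h0
        · replace h0 : evolve ω t u = false := by simpa using h0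
          have h3 := new_site h1 h0
          have hnb : ∀ w ∈ (nbrs u).filter fun y => evolve ω t y = true,
              w.1.natAbs ≤ m ∧ w.2.natAbs ≤ m := by
            intro w hw
            rw [Finset.mem_filter] at hw
            exact ih w (claim_nbr u w hu (open_final h1) hw.1 (open_final hw.2)) hw.2
          by_contra hcon
          obtain ⟨u1, u2⟩ := u
          simp only [not_and_or, not_le] at hcon
          have hone : ((nbrs ((u1, u2) : Site)).filter fun y => evolve ω t y = true).card ≤ 1 := by
            refine Finset.card_le_one.2 ?_
            intro a ha b hb
            have hba := hnb a ha
            have hbb := hnb b hb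
            rw [Finset.mem_filter] at ha hb
            have ha' := ha.1
            have hb' := hb.1
            simp only [nbrs, Finset.mem_insert, Finset.mem_singleton] at ha' hb'
            rcases ha' with rfl | rfl | rfl | rfl <;> rcases hb' with rfl | rfl | rfl | rfl <;>
              simp only [Prod.mk.injEq] at hba hbb ⊢ <;>
              constructor <;> omega
          omega
    -- hence K is finite: contradiction
    have hKsub : K ⊆ {z : Site | z.1.natAbs ≤ m ∧ z.2.natAbs ≤ m} ∪ {((0,0) : Site)} := by
      intro y hy
      by_cases hy0 : y = (0,0)
      · exact Or.inr hy0
      · left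
        have hyfin : finalOpen ω y := by
          obtain ⟨wwalk⟩ := (hy : Reach Sfin (0,0) y)
          cases wwalk with
          | nil => exact absurd rfl hy0
          | cons h p =>
            have := SimpleGraph.Walk.getLast_support (SimpleGraph.Walk.cons h p)
            exact (walk_support_mem h0fin (SimpleGraph.Walk.cons h p) y
              (SimpleGraph.Walk.end_mem_support _)) 
        obtain ⟨t, htt⟩ := hyfin
        exact hbox t y hy htt
    have hfin : ({z : Site | z.1.natAbs ≤ m ∧ z.2.natAbs ≤ m} ∪ {((0,0) : Site)}).Finite := by
      refine Set.Finite.union ?_ (Set.finite_singleton _)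
      refine (Set.finite_Icc ((-(m:ℤ), -(m:ℤ)) : Site) ((m, m) : Site)).subset ?_
      intro z hz
      simp only [Set.mem_Icc, Prod.le_def]
      obtain ⟨hz1, hz2⟩ := hz
      exact ⟨⟨by omega, by omega⟩, by omega, by omega⟩
    exact hKinf (hfin.subset hKsub)
  -- now split on whether the origin is open at time 0
  by_cases h00 : ω (0,0) = true
  · -- the origin is open at time 0; astar = origin
    have hastar0 : astar = (0,0) := by rw [hastardef, desc_of_open0 h00]
    -- every point of C other than origin connects to a star-neighbour avoiding origin
    have hcut : ∀ y ∈ C, y ≠ (0,0) →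
        ∃ w : Site, adjStar (0,0) w ∧ ω w = true ∧
          ConnIn {z : Site | ω z = true ∧ z ≠ (0,0)} adjStar w y := by
      intro y hy hy0
      have hconn : ConnIn {z | ω z = true} adjStar (0,0) y := by
        refine reach_to_connIn h00 ?_
        rw [← hastar0]; exact hy
      obtain ⟨k, π, hπ0, hπl, hinj, hadj, hmem⟩ := hconn
      -- k ≥ 1
      rcases k with _ | k'
      · exfalso; apply hy0; rw [← hπl, ← hπ0]; rfl
      · refine ⟨π 1, ?_, hmem 1, ?_⟩
        · rw [← hπ0]
          have := hadj 0
          simpa using this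
        · refine ⟨k', fun i => π i.succ, rfl, ?_, ?_, ?_, ?_⟩
          · rw [← hπl]; rfl
          · intro a b hab; exact Fin.succ_injective _ (hinj hab)
          · intro i
            have := hadj i.succ
            have e1 : (i.succ).castSucc = (i.castSucc).succ := rfl
            rw [e1] at this
            exact this
          · intro i
            refine ⟨hmem i.succ, ?_⟩
            intro hcon
            have : i.succ = 0 := hinj (by
              show π i.succ = π 0
              rw [show π i.succ = ((0,0) : Site) from hcon, hπ0])
            exact absurd this (Fin.succ_ne_zero i)
    -- pigeonhole over the finitely many star-neighbours of the origin
    by_contra hcon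
    push_neg at hcon
    have hfin8 : {w : Site | adjStar (0,0) w}.Finite := by
      refine (Set.finite_Icc ((-1, -1) : Site) ((1, 1) : Site)).subset ?_
      rintro z ⟨hne, hz1, hz2⟩
      simp only [Set.mem_Icc, Prod.le_def]
      simp only at hz1 hz2
      exact ⟨⟨by omega, by omega⟩, by omega, by omega⟩
    have hCsub : C ⊆ (⋃ w ∈ {w : Site | adjStar (0,0) w},
        {y | ConnIn {z : Site | ω z = true ∧ z ≠ (0,0)} adjStar w y}) ∪ {((0,0) : Site)} := by
      intro y hy
      by_cases hy0 : y = (0,0)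
      · exact Or.inr hy0
      · obtain ⟨w, hw1, hw2, hw3⟩ := hcut y hy hy0
        left
        exact Set.mem_biUnion hw1 hw3
    have : ((⋃ w ∈ {w : Site | adjStar (0,0) w},
        {y | ConnIn {z : Site | ω z = true ∧ z ≠ (0,0)} adjStar w y}) ∪ {((0,0) : Site)}).Finite := by
      refine Set.Finite.union ?_ (Set.finite_singleton _)
      refine Set.Finite.biUnion hfin8 ?_
      intro w hw
      by_cases hwo : ω w = true
      · exact hcon w hw hwo
      · -- w closed: the connectivity set is empty
        refine Set.Finite.subset (Set.finite_singleton w) ?_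
        intro y hy
        obtain ⟨k, π, hπ0, hπl, hinj, hadj, hmem⟩ := hy
        have := (hmem 0).1
        rw [hπ0] at this
        exact absurd this (by simp [hwo])
    exact hCinf (this.subset hCsub)
  · -- the origin is closed at time 0
    replace h00 : ω (0,0) = false := by simpa using h00
    -- some star-neighbour of the origin must be open at time 0 (else ring is stable)
    have hex : ∃ w : Site, adjStar (0,0) w ∧ ω w = true := by
      by_contra hcon
      push_neg at hcon
      have hallclosed : ∀ w : Site, adjStar (0,0) w → ω w = false := by
        intro w hw
        have := hcon w hw
        simpa using this
      -- K has an element other than the origin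
      obtain ⟨y, hy, hy0⟩ : ∃ y ∈ K, y ≠ ((0,0) : Site) := by
        by_contra hc
        push_neg at hc
        exact hKinf ((Set.finite_singleton ((0,0):Site)).subset (fun y hy => hc y hy))
      obtain ⟨wwalk⟩ := (hy : Reach Sfin (0,0) y)
      cases wwalk with
      | nil => exact absurd rfl hy0
      | cons hadj p =>
        rename_i b
        have hbfin : finalOpen ω b := hadj.2.2.1
        obtain ⟨t, hbt⟩ := hbfin
        have := ring_stable hallclosed t b hadj.2.2.2
        rw [this] at hbt
        exact absurd hbt (by simp)
    obtain ⟨w, hw1, hw2⟩ := hex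
    refine ⟨w, hw1, hw2, ?_⟩
    -- w is finally reachable from the origin
    have hwK : Reach Sfin (0,0) w :=
      SimpleGraph.Adj.reachable ⟨hw1.1, h0fin, open_final (show evolve ω 0 w = true from hw2), hw1⟩
    have hwC : Reach {z | ω z = true} astar w := claim1 w hw2 hwK
    -- the cluster of w at time 0 is infinite, and avoids the origin automatically
    have hsub : C ⊆ {y | ConnIn {z : Site | ω z = true ∧ z ≠ (0,0)} adjStar w y} := by
      intro y hy
      have hreach : Reach {z | ω z = true} w y := hwC.symm.trans hy
      have hconn := reach_to_connIn (show w ∈ {z | ω z = true} from hw2) hreach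
      obtain ⟨k, π, hπ0, hπl, hinj, hadj, hmem⟩ := hconn
      refine ⟨k, π, hπ0, hπl, hinj, hadj, ?_⟩
      intro i
      refine ⟨hmem i, ?_⟩
      intro hi
      have := hmem i
      rw [hi] at this
      simp only [Set.mem_setOf_eq] at this
      rw [h00] at this
      exact absurd this (by simp)
    exact hCinf.mono hsub

/-! ### Measure-theoretic part -/

/-- Cylinder events not involving the origin. -/
def cylEvents : Set (Set Config) :=
  {B | ∃ (s : Finset Site) (η : Site → Bool), (0,0) ∉ s ∧ B = {ω | ∀ x ∈ s, ω x = η x}}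

/-- The σ-algebra generated by the coordinates other than the origin. -/
def F0 : MeasurableSpace Config := MeasurableSpace.generateFrom cylEvents

lemma cyl_measurable {s : Finset Site} {η : Site → Bool} :
    MeasurableSet {ω : Config | ∀ x ∈ s, ω x = η x} := by
  have : {ω : Config | ∀ x ∈ s, ω x = η x} = ⋂ x ∈ s, {ω : Config | ω x = η x} := by
    ext ω; simp
  rw [this]
  refine MeasurableSet.biInter s.countable_toSet ?_
  intro x _
  show MeasurableSet ((fun ω : Config => ω x) ⁻¹' {η x})
  exact measurable_pi_apply x (MeasurableSet.singleton (η x))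

lemma F0_le : F0 ≤ (inferInstance : MeasurableSpace Config) := by
  refine MeasurableSpace.generateFrom_le ?_
  rintro B ⟨s, η, h0, rfl⟩
  exact cyl_measurable

lemma isPiSystem_cylEvents : IsPiSystem cylEvents := by
  rintro B1 ⟨s1, η1, h01, rfl⟩ B2 ⟨s2, η2, h02, rfl⟩ hne
  obtain ⟨ω0, hω1, hω2⟩ := hne
  refine ⟨s1 ∪ s2, fun x => if x ∈ s1 then η1 x else η2 x,
    by simp only [Finset.mem_union]; push_neg; exact ⟨h01, h02⟩, ?_⟩
  ext ω
  simp only [Set.mem_inter_iff, Set.mem_setOf_eq, Finset.mem_union]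
  constructor
  · rintro ⟨ha, hb⟩ x hx
    by_cases hx1 : x ∈ s1
    · rw [if_pos hx1]; exact ha x hx1
    · rw [if_neg hx1]; exact hb x (hx.resolve_left hx1)
  · intro h
    constructor
    · intro x hx
      have := h x (Or.inl hx)
      rwa [if_pos hx] at this
    · intro x hx
      have := h x (Or.inr hx)
      by_cases hx1 : x ∈ s1
      · rw [if_pos hx1] at this
        rw [this]
        have e1 := hω1 x hx1
        have e2 := hω2 x hx
        exact e1.symm.trans e2
      · rwa [if_neg hx1] at this

lemma mu_E {p : ℝ} {μ : Measure Config} (hμ : IsBernoulli p μ) :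
    μ {ω : Config | ω (0,0) = true} = ENNReal.ofReal p := by
  have := hμ {(0,0)} (fun _ => true)
  simpa using this

/-- Independence of the origin's state from origin-free events. -/
lemma indep_origin {p : ℝ} {μ : Measure Config} [IsProbabilityMeasure μ]
    (hμ : IsBernoulli p μ) :
    ∀ B : Set Config, MeasurableSet[F0] B →
      μ ({ω : Config | ω (0,0) = true} ∩ B) = ENNReal.ofReal p * μ B := by
  have hind := @MeasurableSpace.induction_on_inter Config F0
    (fun B _ => μ ({ω : Config | ω (0,0) = true} ∩ B) = ENNReal.ofReal p * μ B)
    cylEvents rfl isPiSystem_cylEvents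
  refine hind ?_ ?_ ?_ ?_
  · simp
  · -- basic cylinders
    rintro B ⟨s, η, h0, rfl⟩
    have hset : {ω : Config | ω (0,0) = true} ∩ {ω | ∀ x ∈ s, ω x = η x} =
        {ω : Config | ∀ x ∈ insert ((0,0) : Site) s, ω x =
          (fun x => if x = (0,0) then true else η x) x} := by
      ext ω
      simp only [Set.mem_inter_iff, Set.mem_setOf_eq, Finset.mem_insert]
      constructor
      · rintro ⟨h1, h2⟩ x hx
        rcases hx with rfl | hx
        · simpa using h1
        · have hxne : x ≠ (0,0) := fun hh => h0 (hh ▸ hx)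
          rw [if_neg hxne]; exact h2 x hx
      · intro h
        constructor
        · have := h (0,0) (Or.inl rfl)
          simpa using this
        · intro x hx
          have := h x (Or.inr hx)
          have hxne : x ≠ (0,0) := fun hh => h0 (hh ▸ hx)
          rwa [if_neg hxne] at this
          
    rw [hset, hμ (insert ((0,0) : Site) s) _, hμ s η, Finset.prod_insert h0]
    simp only [if_pos rfl, if_true]
    congr 1
    refine Finset.prod_congr rfl ?_
    intro x hx
    have hxne : x ≠ (0,0) := fun hh => h0 (hh ▸ hx)
    rw [if_neg hxne]
  · -- complements
    intro t htF ht
    have ht' : MeasurableSet t := F0_le t htF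
    have h1 : μ ({ω : Config | ω (0,0) = true} ∩ t) +
        μ ({ω : Config | ω (0,0) = true} \ t) = μ {ω : Config | ω (0,0) = true} :=
      measure_inter_add_diff _ ht'
    have h2 : μ t + μ tᶜ = 1 := by
      rw [measure_add_measure_compl ht', measure_univ]
    have hfin : ENNReal.ofReal p * μ t ≠ ⊤ :=
      ENNReal.mul_ne_top ENNReal.ofReal_ne_top (measure_ne_top μ t)
    have key : ENNReal.ofReal p * μ t + μ ({ω : Config | ω (0,0) = true} ∩ tᶜ) =
        ENNReal.ofReal p * μ t + ENNReal.ofReal p * μ tᶜ := by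
      have e1 : {ω : Config | ω (0,0) = true} ∩ tᶜ = {ω : Config | ω (0,0) = true} \ t :=
        (Set.diff_eq _ _).symm
      rw [e1, ← ht, h1, ht, ← mul_add, h2, mul_one, mu_E hμ]
    exact (ENNReal.add_right_inj hfin).1 key
  · -- disjoint unions
    intro f hdisj hmeasF hC
    have hmeas : ∀ i, MeasurableSet (f i) := fun i => F0_le _ (hmeasF i)
    have h1 : {ω : Config | ω (0,0) = true} ∩ ⋃ i, f i =
        ⋃ i, ({ω : Config | ω (0,0) = true} ∩ f i) := by
      rw [Set.inter_iUnion]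
    rw [h1, measure_iUnion ?_ ?_, measure_iUnion hdisj hmeas]
    · rw [← ENNReal.tsum_mul_left]
      exact tsum_congr hC
    · intro i j hij
      exact ((hdisj hij).inf_left' _).inf_right' _
    · intro i
      have hE : MeasurableSet {ω : Config | ω (0,0) = true} := by
        show MeasurableSet ((fun ω : Config => ω (0,0)) ⁻¹' {true})
        exact measurable_pi_apply _ (MeasurableSet.singleton true)
      exact hE.inter (hmeas i)

/-! ### The event `A` and its measurability -/

def Aset : Set Config :=
  {ω | ∃ w : Site, adjStar (0,0) w ∧ ω w = true ∧
    {y | ConnIn {z : Site | ω z = true ∧ z ≠ (0,0)} adjStar w y}.Infinite}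

lemma basic_F0 {z : Site} (hz : z ≠ (0,0)) :
    MeasurableSet[F0] {ω : Config | ω z = true} := by
  refine MeasurableSpace.measurableSet_generateFrom ?_
  refine ⟨{z}, fun _ => true,
    by simp only [Finset.mem_singleton]; exact fun h => hz h.symm, ?_⟩
  ext ω; simp

lemma infinite_iff_finset (S : Set Site) :
    S.Infinite ↔ ∀ Fs : Finset Site, ∃ y, y ∉ Fs ∧ y ∈ S := by
  constructor
  · intro h Fs
    obtain ⟨y, hy⟩ := (h.diff Fs.finite_toSet).nonempty
    exact ⟨y, by simpa using hy.2, hy.1⟩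
  · intro h hfin
    obtain ⟨y, hy1, hy2⟩ := h hfin.toFinset
    exact hy1 (hfin.mem_toFinset.2 hy2)

lemma conn_F0 (w y : Site) :
    MeasurableSet[F0] {ω : Config | ConnIn {z : Site | ω z = true ∧ z ≠ (0,0)} adjStar w y} := by
  have heq : {ω : Config | ConnIn {z : Site | ω z = true ∧ z ≠ (0,0)} adjStar w y} =
      ⋃ k : ℕ, ⋃ π ∈ {π : Fin (k + 1) → Site |
        π 0 = w ∧ π (Fin.last k) = y ∧ Function.Injective π ∧
        (∀ i : Fin k, adjStar (π i.castSucc) (π i.succ)) ∧ ∀ i, π i ≠ (0,0)},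
      ⋂ i, {ω : Config | ω (π i) = true} := by
    ext ω
    simp only [Set.mem_setOf_eq, Set.mem_iUnion, Set.mem_iInter]
    constructor
    · rintro ⟨k, π, h0, hl, hinj, hadj, hmem⟩
      exact ⟨k, π, ⟨h0, hl, hinj, hadj, fun i => (hmem i).2⟩, fun i => (hmem i).1⟩
    · rintro ⟨k, π, ⟨h0, hl, hinj, hadj, hne⟩, hopen⟩
      exact ⟨k, π, h0, hl, hinj, hadj, fun i => ⟨hopen i, hne i⟩⟩
  rw [heq]
  refine MeasurableSet.iUnion fun k => ?_
  refine MeasurableSet.biUnion (Set.to_countable _) fun π hπ => ?_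
  exact MeasurableSet.iInter fun i => basic_F0 (hπ.2.2.2.2 i)

lemma infinite_F0 (w : Site) :
    MeasurableSet[F0] {ω : Config |
      {y | ConnIn {z : Site | ω z = true ∧ z ≠ (0,0)} adjStar w y}.Infinite} := by
  have heq : {ω : Config |
      {y | ConnIn {z : Site | ω z = true ∧ z ≠ (0,0)} adjStar w y}.Infinite} =
      ⋂ Fs : Finset Site, ⋃ y ∈ {y : Site | y ∉ Fs},
        {ω : Config | ConnIn {z : Site | ω z = true ∧ z ≠ (0,0)} adjStar w y} := by
    ext ω
    simp only [Set.mem_setOf_eq, Set.mem_iInter, Set.mem_iUnion]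
    rw [infinite_iff_finset]
    constructor
    · intro h Fs
      obtain ⟨y, h1, h2⟩ := h Fs
      exact ⟨y, h1, h2⟩
    · intro h Fs
      obtain ⟨y, h1, h2⟩ := h Fs
      exact ⟨y, h1, h2⟩
  rw [heq]
  refine MeasurableSet.iInter fun Fs => ?_
  exact MeasurableSet.biUnion (Set.to_countable _) fun y _ => conn_F0 w y

lemma Aset_F0 : MeasurableSet[F0] Aset := by
  have heq : Aset = ⋃ w ∈ {w : Site | adjStar (0,0) w},
      ({ω : Config | ω w = true} ∩ {ω : Config |
        {y | ConnIn {z : Site | ω z = true ∧ z ≠ (0,0)} adjStar w y}.Infinite}) := by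
    ext ω
    simp only [Aset, Set.mem_setOf_eq, Set.mem_iUnion, Set.mem_inter_iff]
    constructor
    · rintro ⟨w, h1, h2, h3⟩; exact ⟨w, h1, h2, h3⟩
    · rintro ⟨w, h1, h2, h3⟩; exact ⟨w, h1, h2, h3⟩
  rw [heq]
  refine MeasurableSet.biUnion (Set.to_countable _) fun w hw => ?_
  exact (basic_F0 (Ne.symm hw.1)).inter (infinite_F0 w)

/-! ### Subset relations between the events -/

lemma connIn_cons {ω : Config} {w y : Site} (h00 : ω (0,0) = true)
    (hw : adjStar (0,0) w)
    (h : ConnIn {z : Site | ω z = true ∧ z ≠ (0,0)} adjStar w y) :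
    ConnIn {z : Site | ω z = true} adjStar (0,0) y := by
  obtain ⟨k, π, h0, hl, hinj, hadj, hmem⟩ := h
  refine ⟨k+1, Fin.cons (0,0) π, Fin.cons_zero _ _, ?_, ?_, ?_, ?_⟩
  · rw [show Fin.last (k+1) = (Fin.last k).succ from rfl, Fin.cons_succ]; exact hl
  · rw [Fin.cons_injective_iff]
    refine ⟨?_, hinj⟩
    rintro ⟨i, hi⟩
    exact (hmem i).2 hi
  · intro i
    refine Fin.cases ?_ ?_ i
    · have e0 : (Fin.castSucc (0 : Fin (k+1))) = (0 : Fin (k+2)) := rfl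
      rw [e0, Fin.cons_zero]
      have e1 : ((0 : Fin (k+1)).succ) = (Fin.succ (0 : Fin (k+1))) := rfl
      rw [e1, Fin.cons_succ, h0]
      exact hw
    · intro j
      have e1 : (Fin.castSucc (Fin.succ j)) = Fin.succ (Fin.castSucc j) := rfl
      rw [e1, Fin.cons_succ, Fin.cons_succ]
      exact hadj j
  · intro i
    refine Fin.cases ?_ ?_ i
    · rw [Fin.cons_zero]; exact h00
    · intro j; rw [Fin.cons_succ]; exact (hmem j).1

lemma EA_subset : {ω : Config | ω (0,0) = true} ∩ Aset ⊆
    {ω : Config | InfClusterIn {z | ω z = true} adjStar (0,0)} := by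
  rintro ω ⟨hE, w, hw1, hw2, hinf⟩
  refine ⟨hE, ?_⟩
  refine hinf.mono ?_
  intro y hy
  exact connIn_cons hE hw1 hy

lemma open_mono_subsets (ω : Config) (n : ℕ) :
    {z : Site | ω z = true} ⊆ {z | evolve ω n z = true} := by
  intro z hz
  exact evolve_mono ω (Nat.zero_le n) hz

lemma evolve_final_subsets (ω : Config) (n : ℕ) :
    {z : Site | evolve ω n z = true} ⊆ {z | finalOpen ω z} := by
  intro z hz
  exact ⟨n, hz⟩

/-- For `p ∈ (p_c^*, 1]` and every `n ∈ [1,∞]`, the percolation probabilities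
(of the origin belonging to an infinite open `*`-cluster at time `n`) satisfy
`θ(p) ≤ θ(p,n) ≤ (1/p) θ(p)`. -/
theorem theta_sandwich (p : ℝ) (hp : 1 - pc < p) (hp1 : p ≤ 1)
    (μ : Measure Config) [IsProbabilityMeasure μ] (hμ : IsBernoulli p μ) :
    (∀ n : ℕ, 1 ≤ n →
      μ {ω : Config | InfClusterIn {z | ω z = true} adjStar (0, 0)}
        ≤ μ {ω : Config | InfClusterIn {z | evolve ω n z = true} adjStar (0, 0)}
      ∧ μ {ω : Config | InfClusterIn {z | evolve ω n z = true} adjStar (0, 0)}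
        ≤ ENNReal.ofReal (1 / p)
            * μ {ω : Config | InfClusterIn {z | ω z = true} adjStar (0, 0)})
    ∧ (μ {ω : Config | InfClusterIn {z | ω z = true} adjStar (0, 0)}
        ≤ μ {ω : Config | InfClusterIn {z | finalOpen ω z} adjStar (0, 0)}
      ∧ μ {ω : Config | InfClusterIn {z | finalOpen ω z} adjStar (0, 0)}
        ≤ ENNReal.ofReal (1 / p)
            * μ {ω : Config | InfClusterIn {z | ω z = true} adjStar (0, 0)}) := by
  have hpc1 : pc ≤ 1 := by
    unfold pc
    rcases Set.eq_empty_or_nonempty {p : ℝ | p ∈ Set.Icc (0 : ℝ) 1 ∧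
        ∀ μ : Measure Config, IsProbabilityMeasure μ → IsBernoulli p μ →
          0 < μ {ω : Config | ∃ x : Site, InfClusterIn {z | ω z = true} adj x}} with he | hne
    · rw [he, Real.sInf_empty]; norm_num
    · obtain ⟨x, hx⟩ := hne
      have hb : BddBelow {p : ℝ | p ∈ Set.Icc (0 : ℝ) 1 ∧
          ∀ μ : Measure Config, IsProbabilityMeasure μ → IsBernoulli p μ →
            0 < μ {ω : Config | ∃ x : Site, InfClusterIn {z | ω z = true} adj x}} :=
        ⟨0, fun y hy => hy.1.1⟩
      exact le_trans (csInf_le hb hx) hx.1.2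
  have hp0 : 0 < p := by linarith
  have hAbound : μ Aset ≤ ENNReal.ofReal (1/p) *
      μ {ω : Config | InfClusterIn {z | ω z = true} adjStar (0, 0)} := by
    have h1 : ENNReal.ofReal p * μ Aset = μ ({ω : Config | ω (0,0) = true} ∩ Aset) :=
      (indep_origin hμ Aset Aset_F0).symm
    have h2 : μ ({ω : Config | ω (0,0) = true} ∩ Aset) ≤
        μ {ω : Config | InfClusterIn {z | ω z = true} adjStar (0, 0)} :=
      measure_mono EA_subset
    calc μ Aset = ENNReal.ofReal (1/p) * (ENNReal.ofReal p * μ Aset) := by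
          rw [← mul_assoc, ← ENNReal.ofReal_mul (by positivity),
            one_div_mul_cancel hp0.ne', ENNReal.ofReal_one, one_mul]
      _ ≤ _ := by
          rw [h1]
          exact mul_le_mul_right h2 _
  have hfinal_le : μ {ω : Config | InfClusterIn {z | finalOpen ω z} adjStar (0, 0)} ≤ μ Aset :=
    measure_mono (fun ω h => main_det h)
  refine ⟨?_, ?_, le_trans hfinal_le hAbound⟩
  · intro n _
    constructor
    · exact measure_mono (fun ω h => infCluster_mono (open_mono_subsets ω n) h)
    · refine le_trans (measure_mono
        (fun ω h => infCluster_mono (evolve_final_subsets ω n) h)) ?_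
      exact le_trans hfinal_le hAbound
  · exact measure_mono (fun ω h => infCluster_mono (evolve_final_subsets ω 0) h)
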